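/- Let $X \in \mathbb{R}^{n\times p}$ with $X^T X = I_p$, $E \in \mathbb{R}^{n\times p}$ with $X^T E$ skew-symmetric, $W = -(I_n - XX^T)E$, and $J = I_p + \frac{\tau^2}{4}W^T W + \frac{\tau}{2}X^T E$. Then $(2J^{-1} - I_p)^T(2J^{-1} - I_p) + \tau^2 J^{-T}W^T W J^{-1} = I_p$, and consequently $\|2J^{-1} - I_p\|_2 \leq 1$ and $\|J^{-1}\|_2 \leq 1$. -/

import Mathlib

open Matrix

/-- Spectral norm of a real square matrix. -/
noncomputable def spec {p : ℕ} (A : Matrix (Fin p) (Fin p) ℝ) : ℝ :=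
  ‖(Matrix.toEuclideanCLM (𝕜 := ℝ) A : EuclideanSpace ℝ (Fin p) →L[ℝ] EuclideanSpace ℝ (Fin p))‖

private lemma dot_aux {m p : ℕ} (B : Matrix (Fin m) (Fin p) ℝ) (x : Fin p → ℝ) :
    x ⬝ᵥ ((Bᵀ * B) *ᵥ x) = (B *ᵥ x) ⬝ᵥ (B *ᵥ x) := by
  rw [← mulVec_mulVec, dotProduct_mulVec, vecMul_transpose]

private lemma spec_le_one_of {p : ℕ} (M : Matrix (Fin p) (Fin p) ℝ)
    (h : ∀ x : Fin p → ℝ, (M *ᵥ x) ⬝ᵥ (M *ᵥ x) ≤ x ⬝ᵥ x) : spec M ≤ 1 := by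
  unfold spec
  refine ContinuousLinearMap.opNorm_le_bound _ zero_le_one fun v => ?_
  rw [one_mul]
  set x : Fin p → ℝ := WithLp.equiv 2 (Fin p → ℝ) v with hx
  have hv : v = (WithLp.equiv 2 (Fin p → ℝ)).symm x := by simp [hx]
  have happ : Matrix.toEuclideanCLM (𝕜 := ℝ) M v
      = (WithLp.equiv 2 (Fin p → ℝ)).symm (M *ᵥ x) := by
    rw [hv]
    simp [Matrix.toLin'_apply]
  have hnorm : ∀ y : Fin p → ℝ,
      ‖(WithLp.equiv 2 (Fin p → ℝ)).symm y‖ ^ 2 = y ⬝ᵥ y := by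
    intro y
    rw [EuclideanSpace.norm_eq, Real.sq_sqrt (by positivity)]
    simp [dotProduct, sq]
  have h1 : ‖Matrix.toEuclideanCLM (𝕜 := ℝ) M v‖ ^ 2 ≤ ‖v‖ ^ 2 := by
    rw [happ, hv, hnorm, hnorm]; exact h x
  nlinarith [norm_nonneg v, norm_nonneg (Matrix.toEuclideanCLM (𝕜 := ℝ) M v)]

set_option maxHeartbeats 1000000 in
set_option synthInstance.maxHeartbeats 200000 in
/-- `(2J⁻¹ - I)ᵀ(2J⁻¹ - I) + τ² J⁻ᵀ Wᵀ W J⁻¹ = I`, hence `‖2J⁻¹ - I‖₂ ≤ 1` and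
`‖J⁻¹‖₂ ≤ 1`. -/
theorem stmt_11 (n p : ℕ) (X E : Matrix (Fin n) (Fin p) ℝ)
    (hX : Xᵀ * X = 1) (hskew : (Xᵀ * E)ᵀ = -(Xᵀ * E))
    (W : Matrix (Fin n) (Fin p) ℝ) (hW : W = -((1 - X * Xᵀ) * E))
    (τ : ℝ) (hτ : 0 ≤ τ)
    (J : Matrix (Fin p) (Fin p) ℝ)
    (hJ : J = 1 + (τ ^ 2 / 4) • (Wᵀ * W) + (τ / 2) • (Xᵀ * E)) :
    ((2 : ℝ) • J⁻¹ - 1)ᵀ * ((2 : ℝ) • J⁻¹ - 1) + (τ ^ 2) • ((J⁻¹)ᵀ * (Wᵀ * W) * J⁻¹) = 1 ∧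
      spec ((2 : ℝ) • J⁻¹ - 1) ≤ 1 ∧ spec J⁻¹ ≤ 1 := by
  have hKt : (Wᵀ * W)ᵀ = Wᵀ * W := by rw [transpose_mul, transpose_transpose]
  have hJT : Jᵀ = 1 + (τ ^ 2 / 4) • (Wᵀ * W) - (τ / 2) • (Xᵀ * E) := by
    rw [hJ]
    simp only [transpose_add, transpose_smul, transpose_one, hKt, hskew]
    module
  -- J is invertible
  have hdet : IsUnit J.det := by
    rw [← isUnit_iff_isUnit_det, ← Matrix.mulVec_injective_iff_isUnit]
    intro u v huv
    have hw : J *ᵥ (u - v) = 0 := by rw [mulVec_sub, huv, sub_self]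
    set w := u - v with hwdef
    have hq : w ⬝ᵥ (J *ᵥ w) = 0 := by rw [hw, dotProduct_zero]
    have hAw : w ⬝ᵥ ((Xᵀ * E) *ᵥ w) = 0 := by
      have h1 : w ⬝ᵥ ((Xᵀ * E) *ᵥ w) = -(w ⬝ᵥ ((Xᵀ * E) *ᵥ w)) := by
        conv_lhs => rw [dotProduct_mulVec, ← mulVec_transpose, hskew, neg_mulVec,
          neg_dotProduct, dotProduct_comm]
      linarith
    have hKw : 0 ≤ w ⬝ᵥ ((Wᵀ * W) *ᵥ w) := by
      rw [dot_aux]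
      exact Finset.sum_nonneg fun i _ => mul_self_nonneg _
    have hJw : w ⬝ᵥ (J *ᵥ w)
        = w ⬝ᵥ w + (τ ^ 2 / 4) * (w ⬝ᵥ ((Wᵀ * W) *ᵥ w)) + (τ / 2) * (w ⬝ᵥ ((Xᵀ * E) *ᵥ w)) := by
      rw [hJ, add_mulVec, add_mulVec, one_mulVec, smul_mulVec, smul_mulVec,
        dotProduct_add, dotProduct_add, dotProduct_smul, dotProduct_smul]
      simp [smul_eq_mul]
    have hww : w ⬝ᵥ w ≤ 0 := by rw [hJw, hAw] at hq; nlinarith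
    have hw0 : w ⬝ᵥ w = 0 :=
      le_antisymm hww (Finset.sum_nonneg fun i _ => mul_self_nonneg _)
    exact sub_eq_zero.mp (dotProduct_self_eq_zero.mp hw0)
  have hJJinv : J * J⁻¹ = 1 := Matrix.mul_nonsing_inv J hdet
  -- key algebraic identity
  have key : Jᵀ * J = ((2 : ℝ) • 1 - J)ᵀ * ((2 : ℝ) • 1 - J) + (τ ^ 2) • (Wᵀ * W) := by
    have expand : ((2 : ℝ) • 1 - J)ᵀ * ((2 : ℝ) • 1 - J)
        = (4 : ℝ) • (1 : Matrix (Fin p) (Fin p) ℝ) - (2 : ℝ) • J - (2 : ℝ) • Jᵀ + Jᵀ * J := by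
      simp only [transpose_sub, transpose_smul, transpose_one, sub_mul, mul_sub,
        smul_mul_assoc, mul_smul_comm, one_mul, mul_one, smul_smul]
      module
    have hsum : (2 : ℝ) • J + (2 : ℝ) • Jᵀ
        = (4 : ℝ) • (1 : Matrix (Fin p) (Fin p) ℝ) + (τ ^ 2) • (Wᵀ * W) := by
      rw [hJT, hJ]; module
    have rearr : (4 : ℝ) • (1 : Matrix (Fin p) (Fin p) ℝ) - (2 : ℝ) • J - (2 : ℝ) • Jᵀ
          + Jᵀ * J + (τ ^ 2) • (Wᵀ * W)
        = Jᵀ * J + (((4 : ℝ) • (1 : Matrix (Fin p) (Fin p) ℝ) + (τ ^ 2) • (Wᵀ * W))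
          - ((2 : ℝ) • J + (2 : ℝ) • Jᵀ)) := by abel
    rw [expand, rearr, ← hsum, sub_self, add_zero]
  -- the main identity
  have hM : ((2 : ℝ) • 1 - J) * J⁻¹ = (2 : ℝ) • J⁻¹ - 1 := by
    rw [sub_mul, smul_mul_assoc, one_mul, hJJinv]
  have hpart1 : ((2 : ℝ) • J⁻¹ - 1)ᵀ * ((2 : ℝ) • J⁻¹ - 1)
      + (τ ^ 2) • ((J⁻¹)ᵀ * (Wᵀ * W) * J⁻¹) = 1 := by
    have h1 : (J⁻¹)ᵀ * (Jᵀ * J) * J⁻¹ = 1 := by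
      rw [← Matrix.mul_assoc, ← transpose_mul, Matrix.mul_assoc, hJJinv,
        transpose_one, one_mul]
    calc ((2 : ℝ) • J⁻¹ - 1)ᵀ * ((2 : ℝ) • J⁻¹ - 1)
          + (τ ^ 2) • ((J⁻¹)ᵀ * (Wᵀ * W) * J⁻¹)
        = (J⁻¹)ᵀ * (((2 : ℝ) • 1 - J)ᵀ * ((2 : ℝ) • 1 - J) + (τ ^ 2) • (Wᵀ * W)) * J⁻¹ := by
          rw [← hM, transpose_mul]
          simp only [Matrix.add_mul, Matrix.mul_add, Matrix.smul_mul, Matrix.mul_smul,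
            Matrix.mul_assoc]
      _ = 1 := by rw [← key, h1]
  have hQK : (W * J⁻¹)ᵀ * (W * J⁻¹) = (J⁻¹)ᵀ * (Wᵀ * W) * J⁻¹ := by
    rw [transpose_mul]; simp only [Matrix.mul_assoc]
  have hMM : ((2 : ℝ) • J⁻¹ - 1)ᵀ * ((2 : ℝ) • J⁻¹ - 1)
      = 1 - (τ ^ 2) • ((W * J⁻¹)ᵀ * (W * J⁻¹)) := by
    rw [hQK, eq_sub_iff_add_eq]; exact hpart1
  have hcontr : ∀ x : Fin p → ℝ,
      (((2 : ℝ) • J⁻¹ - 1) *ᵥ x) ⬝ᵥ (((2 : ℝ) • J⁻¹ - 1) *ᵥ x) ≤ x ⬝ᵥ x := by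
    intro x
    have hQ : 0 ≤ x ⬝ᵥ (((W * J⁻¹)ᵀ * (W * J⁻¹)) *ᵥ x) := by
      rw [dot_aux]; exact Finset.sum_nonneg fun i _ => mul_self_nonneg _
    have hda := dot_aux ((2 : ℝ) • J⁻¹ - 1) x
    rw [hMM] at hda
    rw [← hda, sub_mulVec, one_mulVec, smul_mulVec, dotProduct_sub, dotProduct_smul,
      smul_eq_mul]
    nlinarith
  refine ⟨hpart1, spec_le_one_of _ hcontr, ?_⟩
  apply spec_le_one_of
  intro x
  have ha := hcontr x
  have hax : ((2 : ℝ) • J⁻¹ - 1) *ᵥ x = (2 : ℝ) • (J⁻¹ *ᵥ x) - x := by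
    rw [sub_mulVec, one_mulVec, smul_mulVec]
  rw [hax] at ha
  have hs : (0 : ℝ) ≤ (J⁻¹ *ᵥ x - x) ⬝ᵥ (J⁻¹ *ᵥ x - x) :=
    Finset.sum_nonneg fun i _ => mul_self_nonneg _
  have hc : (J⁻¹ *ᵥ x) ⬝ᵥ x = x ⬝ᵥ (J⁻¹ *ᵥ x) := dotProduct_comm _ _
  simp only [dotProduct_sub, sub_dotProduct, dotProduct_smul, smul_dotProduct,
    smul_eq_mul] at ha hs
  nlinarith [ha, hs, hc]
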